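/- For ordinary kriging with weight matrix W = (1/b)·𝟙_m 𝟙_kᵀ C_ξ⁻¹ + C_{ξ0}ᵀ C_ξ⁻¹ (I_k - (1/b)·𝟙_k 𝟙_kᵀ C_ξ⁻¹) where b = 𝟙_kᵀ C_ξ⁻¹ 𝟙_k, the kriging covariance matrix W C_ξ Wᵀ - W C_{ξ0} - C_{ξ0}ᵀ Wᵀ + C₀ equals C₀ - C_{ξ0}ᵀ C_ξ⁻¹ C_{ξ0} + (1/b)(𝟙_m - C_{ξ0}ᵀ C_ξ⁻¹ 𝟙_k)(𝟙_m - C_{ξ0}ᵀ C_ξ⁻¹ 𝟙_k)ᵀ. -/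

import Mathlib

open Matrix

private theorem krig_aux {k m : ℕ}
    (Cξ P : Matrix (Fin k) (Fin k) ℝ) (Cξ0 : Matrix (Fin k) (Fin m) ℝ)
    (C₀ : Matrix (Fin m) (Fin m) ℝ)
    (onek : Matrix (Fin k) (Fin 1) ℝ) (onem : Matrix (Fin m) (Fin 1) ℝ)
    (b : ℝ) (hb : b ≠ 0)
    (hPs : Pᵀ = P)
    (h2 : ∀ (n : ℕ) (X : Matrix (Fin k) (Fin n) ℝ), P * (Cξ * X) = X)
    (hs : ∀ (n : ℕ) (X : Matrix (Fin 1) (Fin n) ℝ), onekᵀ * (P * (onek * X)) = b • X) :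
    ((1 / b) • (onem * onekᵀ * P) + Cξ0ᵀ * P * (1 - (1 / b) • (onek * onekᵀ * P))) * Cξ
        * ((1 / b) • (onem * onekᵀ * P) + Cξ0ᵀ * P * (1 - (1 / b) • (onek * onekᵀ * P)))ᵀ
      - ((1 / b) • (onem * onekᵀ * P) + Cξ0ᵀ * P * (1 - (1 / b) • (onek * onekᵀ * P))) * Cξ0
      - Cξ0ᵀ * ((1 / b) • (onem * onekᵀ * P) + Cξ0ᵀ * P * (1 - (1 / b) • (onek * onekᵀ * P)))ᵀ
      + C₀
      = C₀ - Cξ0ᵀ * P * Cξ0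
        + (1 / b) • ((onem - Cξ0ᵀ * P * onek) * (onem - Cξ0ᵀ * P * onek)ᵀ) := by
  simp only [Matrix.mul_add, Matrix.add_mul, Matrix.mul_sub, Matrix.sub_mul,
    Matrix.mul_one, Matrix.one_mul, transpose_add, transpose_sub, transpose_smul,
    transpose_mul, transpose_one, hPs, transpose_transpose,
    Matrix.smul_mul, Matrix.mul_smul, Matrix.mul_assoc, h2, hs,
    smul_smul, smul_sub, smul_add]
  match_scalars <;> field_simp <;> ring

theorem ordinary_kriging_covariance {k m : ℕ}
    (Cξ : Matrix (Fin k) (Fin k) ℝ) (Cξ0 : Matrix (Fin k) (Fin m) ℝ)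
    (C₀ : Matrix (Fin m) (Fin m) ℝ) (hCξ : Cξ.PosDef) :
    let onek : Matrix (Fin k) (Fin 1) ℝ := Matrix.of fun _ _ => 1
    let onem : Matrix (Fin m) (Fin 1) ℝ := Matrix.of fun _ _ => 1
    let b : ℝ := (onekᵀ * Cξ⁻¹ * onek) 0 0
    let W := (1 / b) • (onem * onekᵀ * Cξ⁻¹)
      + Cξ0ᵀ * Cξ⁻¹ * (1 - (1 / b) • (onek * onekᵀ * Cξ⁻¹))
    b > 0 →
    W * Cξ * Wᵀ - W * Cξ0 - Cξ0ᵀ * Wᵀ + C₀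
      = C₀ - Cξ0ᵀ * Cξ⁻¹ * Cξ0
        + (1 / b) • ((onem - Cξ0ᵀ * Cξ⁻¹ * onek) * (onem - Cξ0ᵀ * Cξ⁻¹ * onek)ᵀ) := by
  intro onek onem b W hb
  have hdet : IsUnit Cξ.det := isUnit_iff_ne_zero.mpr hCξ.det_pos.ne'
  have hsymm : Cξᵀ = Cξ := by
    have := hCξ.isHermitian.eq
    rwa [Matrix.conjTranspose_eq_transpose_of_trivial] at this
  have hPs : (Cξ⁻¹)ᵀ = Cξ⁻¹ := by
    rw [Matrix.transpose_nonsing_inv, hsymm]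
  have h2 : ∀ (n : ℕ) (X : Matrix (Fin k) (Fin n) ℝ), Cξ⁻¹ * (Cξ * X) = X := by
    intro n X
    rw [← Matrix.mul_assoc, Matrix.nonsing_inv_mul _ hdet, Matrix.one_mul]
  have hkey : onekᵀ * Cξ⁻¹ * onek = b • (1 : Matrix (Fin 1) (Fin 1) ℝ) := by
    ext i j
    fin_cases i; fin_cases j
    simp [b, Matrix.smul_apply]
  have hs : ∀ (n : ℕ) (X : Matrix (Fin 1) (Fin n) ℝ),
      onekᵀ * (Cξ⁻¹ * (onek * X)) = b • X := by
    intro n X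
    rw [← Matrix.mul_assoc, ← Matrix.mul_assoc, hkey, Matrix.smul_mul, Matrix.one_mul]
  exact krig_aux Cξ Cξ⁻¹ Cξ0 C₀ onek onem b hb.ne' hPs h2 hs
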